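/- For every integer ℓ ≥ 2, the set of real numbers a^(1/ℓ), where a ranges over integers a ≥ 2 that are ℓ-power-free, is linearly independent over the integers. That is, if a_1, ..., a_m are distinct ℓ-power-free integers ≥ 2 and c_1, ..., c_m are integers with c_1·a_1^(1/ℓ) + ... + c_m·a_m^(1/ℓ) = 0, then c_1 = ... = c_m = 0. -/

import Mathlib

open Polynomial IntermediateField


theorem real_X_pow_sub_C_irreducible {K : Type} [Field K] (f : K →+* ℝ) (n : ℕ) (hn : n ≠ 0)
    (a : K) (ha : 0 < f a) (h : ∀ p : ℕ, p.Prime → p ∣ n → ∀ b : K, b ^ p ≠ a) :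
    Irreducible (X ^ n - C a) := by
  induction n using Nat.strong_induction_on generalizing K with
  | _ n IH =>
  rcases eq_or_ne n 1 with rfl | hn1
  · simpa using irreducible_X_sub_C a
  have hp : (n.minFac).Prime := Nat.minFac_prime hn1
  set p := n.minFac with hpdef
  have hpn : p ∣ n := Nat.minFac_dvd n
  obtain ⟨s, hs⟩ := hpn
  have hirr : Irreducible (X ^ p - C a) :=
    X_pow_sub_C_irreducible_of_prime hp (h p hp (Nat.minFac_dvd n))
  have hs0 : s ≠ 0 := by rintro rfl; simp at hs; exact hn hs
  rw [hs, mul_comm]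
  apply X_pow_mul_sub_C_irreducible hirr
  intro E _ _ x hx
  have hxint : IsIntegral K x := by
    refine ⟨X ^ p - C a, monic_X_pow_sub_C a hp.ne_zero, ?_⟩
    have := minpoly.aeval K x
    rwa [hx] at this
  set pb := IntermediateField.adjoin.powerBasis hxint with hpb
  have hminpoly : minpoly K (IntermediateField.AdjoinSimple.gen K x) = X ^ p - C a := by
    rw [minpoly_gen, hx]
  -- embed K⟮x⟯ into ℝ, sending the generator to the positive real p-th root of f a
  letI : Algebra K ℝ := f.toAlgebra
  have hfa : algebraMap K ℝ a = f a := rfl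
  set r : ℝ := (f a) ^ ((1 : ℝ) / p) with hr
  have hrpos : 0 < r := Real.rpow_pos_of_pos ha _
  have hrp : r ^ p = f a := by
    rw [hr, ← Real.rpow_natCast (f a ^ ((1:ℝ)/p)) p, ← Real.rpow_mul ha.le,
      one_div_mul_cancel (by exact_mod_cast hp.ne_zero), Real.rpow_one]
  have hroot : (Polynomial.aeval r) (minpoly K pb.gen) = 0 := by
    have : pb.gen = IntermediateField.AdjoinSimple.gen K x := by
      rw [hpb, IntermediateField.adjoin.powerBasis_gen]
    rw [this, hminpoly]
    simp [hrp, hfa]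
  set g : K⟮x⟯ →ₐ[K] ℝ := pb.lift r hroot with hg
  have hggen : g pb.gen = r := PowerBasis.lift_gen pb r hroot
  -- the norm of the generator is ± a
  have hdim : pb.dim = p := by
    rw [hpb]
    simp only [IntermediateField.adjoin.powerBasis_dim, minpoly_gen, hx]
    exact natDegree_X_pow_sub_C
  have hnorm : Algebra.norm K (IntermediateField.AdjoinSimple.gen K x)
      = (-1) ^ (p + 1) * a := by
    have := Algebra.PowerBasis.norm_gen_eq_coeff_zero_minpoly pb
    have hgen : pb.gen = IntermediateField.AdjoinSimple.gen K x := by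
      rw [hpb, IntermediateField.adjoin.powerBasis_gen]
    rw [hgen, hminpoly, hdim] at this
    rw [this]
    have : (X ^ p - C a).coeff 0 = -a := by
      simp [coeff_X_pow, coeff_C, Ne.symm hp.ne_zero]
    rw [this]
    ring
  refine IH s ?_ g.toRingHom hs0 _ ?_ ?_
  · rw [hs]; exact lt_mul_of_one_lt_left (Nat.pos_of_ne_zero hs0) hp.one_lt
  · have : pb.gen = IntermediateField.AdjoinSimple.gen K x := by
      rw [hpb, IntermediateField.adjoin.powerBasis_gen]
    show 0 < g (IntermediateField.AdjoinSimple.gen K x)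
    rw [← this, hggen]; exact hrpos
  · -- no q-th powers
    intro q hq hqs b hb
    have hnormb : (Algebra.norm K b) ^ q = (-1) ^ (p + 1) * a := by
      rw [← hnorm, ← hb, map_pow]
    set t := Algebra.norm K b with ht
    have hqn : q ∣ n := hs ▸ Dvd.dvd.mul_left hqs p
    rcases Nat.Prime.eq_two_or_odd' hq with hq2 | hqodd
    · -- q = 2 : a = ± t ^ 2
      subst hq2
      rcases Nat.even_or_odd (p + 1) with he | ho
      · rw [he.neg_one_pow, one_mul] at hnormb
        exact h 2 Nat.prime_two hqn t hnormb
      · rw [ho.neg_one_pow, neg_one_mul] at hnormb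
        have h2 : f t ^ 2 = -f a := by simpa using congrArg f hnormb
        nlinarith [sq_nonneg (f t)]
    · -- q odd : a = (± t) ^ q
      have : ((-1 : K) ^ (p + 1) * t) ^ q = a := by
        rw [mul_pow, ← pow_mul, hnormb]
        rcases Nat.even_or_odd (p+1) with he | ho
        · simp [he.neg_one_pow, (he.mul_right q).neg_one_pow]
        · rw [ho.neg_one_pow, (ho.mul hqodd).neg_one_pow]
          ring
      exact h q hq hqn _ this

theorem radical_nextCoeff_zero (β : ℝ) (hβ : 0 < β) (n : ℕ) (hn : n ≠ 0) (q : ℚ)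
    (hq : (q : ℝ) = β ^ n) (hirr : ∀ r : ℚ, (r : ℝ) ≠ β) :
    IsIntegral ℚ β ∧ (minpoly ℚ β).nextCoeff = 0 := by
  have hP : ∃ k, 0 < k ∧ ∃ r : ℚ, (r : ℝ) = β ^ k := ⟨n, Nat.pos_of_ne_zero hn, q, hq⟩
  classical
  set d := Nat.find hP with hd
  obtain ⟨hd0, r, hr⟩ := Nat.find_spec hP
  have hmin : ∀ k, k < d → ¬(0 < k ∧ ∃ r : ℚ, (r : ℝ) = β ^ k) := fun k hk => Nat.find_min hP hk
  have hd2 : 2 ≤ d := by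
    by_contra h2
    have hd1 : d = 1 := by omega
    rw [← hd, hd1, pow_one] at hr
    exact hirr r hr
  have hrpos : 0 < r := by
    have : (0:ℝ) < (r:ℝ) := hr ▸ pow_pos hβ d
    exact_mod_cast this
  have hirrpoly : Irreducible (X ^ d - C r) := by
    apply real_X_pow_sub_C_irreducible (Rat.castHom ℝ) d (by omega) r
      (by simpa using hrpos)
    intro p hp hpd b hb
    obtain ⟨e, he⟩ := hpd
    have he0 : 0 < e := by
      rcases Nat.eq_zero_or_pos e with rfl | h; · omega
      · exact h
    have hed : e < d := by
      nlinarith [hp.two_le]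
    have hbpow : |(b : ℝ)| ^ p = (β ^ e) ^ p := by
      rw [← pow_mul, mul_comm e p, ← he, ← abs_pow]
      have : ((b ^ p : ℚ) : ℝ) = β ^ d := by rw [hb, hr]
      push_cast at this
      rw [this, abs_of_pos (pow_pos hβ d)]
    have : |(b : ℝ)| = β ^ e :=
      (pow_left_inj₀ (abs_nonneg _) (pow_pos hβ e).le hp.ne_zero).mp hbpow
    exact hmin e hed ⟨he0, |b|, by push_cast; rw [← this]⟩
  have hroot : (Polynomial.aeval β) (X ^ d - C r) = 0 := by
    simp [hr, hd]
  have hmono : (X ^ d - C r).Monic := monic_X_pow_sub_C r (by omega)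
  have hint : IsIntegral ℚ β := ⟨X ^ d - C r, hmono, by simpa using hroot⟩
  have hmp : minpoly ℚ β = X ^ d - C r :=
    (minpoly.eq_of_irreducible_of_monic hirrpoly hroot hmono).symm
  refine ⟨hint, ?_⟩
  rw [hmp, nextCoeff_of_natDegree_pos (by rw [natDegree_X_pow_sub_C]; omega),
    natDegree_X_pow_sub_C, coeff_sub, coeff_X_pow, coeff_C,
    if_neg (by omega), if_neg (by omega), sub_zero]

/-- In a finite extension of `ℚ`, an element whose minimal polynomial has zero `nextCoeff`
has trace zero. -/
theorem trace_eq_zero_of_nextCoeff_zero {F K : Type*} [Field F] [Field K] [Algebra F K]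
    [FiniteDimensional F K] (x : K) (hx : (minpoly F x).nextCoeff = 0) :
    Algebra.trace F K x = 0 := by
  have hint : IsIntegral F x := IsIntegral.of_finite F x
  have h1 : x = algebraMap F⟮x⟯ K (AdjoinSimple.gen F x) := rfl
  have h2 : Algebra.trace F (F⟮x⟯) (AdjoinSimple.gen F x) = 0 := by
    have h3 := (IntermediateField.adjoin.powerBasis hint).trace_gen_eq_nextCoeff_minpoly
    rw [IntermediateField.adjoin.powerBasis_gen] at h3
    rw [h3, minpoly_gen, hx, neg_zero]
  rw [h1, ← Algebra.trace_trace (S := F⟮x⟯), Algebra.trace_algebraMap, map_nsmul, h2, smul_zero]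

/-- `a` is power-`l` free: whenever `a = b ^ l * c`, we have `b = 1`. -/
def PowerFree (l a : ℕ) : Prop := ∀ b c : ℕ, a = b ^ l * c → b = 1

theorem besicovitch_linear_independence
    (l : ℕ) (hl : 2 ≤ l) (m : ℕ) (a : Fin m → ℕ) (c : Fin m → ℤ)
    (ha2 : ∀ i, 2 ≤ a i) (hpf : ∀ i, PowerFree l (a i))
    (hinj : Function.Injective a)
    (hsum : ∑ i, (c i : ℝ) * (a i : ℝ) ^ ((1 : ℝ) / l) = 0) :
    ∀ i, c i = 0 := by
  intro j
  have hl0 : (l : ℝ) ≠ 0 := by positivity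
  set α : Fin m → ℝ := fun i => (a i : ℝ) ^ ((1 : ℝ) / l) with hα
  have hapos : ∀ i, (0:ℝ) < (a i : ℝ) := fun i => by
    have := ha2 i; positivity
  have hαpos : ∀ i, 0 < α i := fun i => Real.rpow_pos_of_pos (hapos i) _
  have hαpow : ∀ i, α i ^ l = (a i : ℝ) := fun i => by
    rw [hα, ← Real.rpow_natCast ((a i : ℝ) ^ ((1:ℝ)/l)) l, ← Real.rpow_mul (hapos i).le,
      one_div_mul_cancel hl0, Real.rpow_one]
  set β : Fin m → ℝ := fun i => α i / α j with hβ
  have hβpos : ∀ i, 0 < β i := fun i => div_pos (hαpos i) (hαpos j)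
  have hβpow : ∀ i, (((a i : ℚ) / (a j : ℚ) : ℚ) : ℝ) = β i ^ l := fun i => by
    rw [hβ]
    push_cast
    rw [div_pow, hαpow, hαpow]
  -- irrationality of the ratios
  have hβirr : ∀ i, i ≠ j → ∀ r : ℚ, (r : ℝ) ≠ β i := by
    intro i hij r hr
    have hrpos : 0 < r := by
      have : (0:ℝ) < (r:ℝ) := hr ▸ hβpos i
      exact_mod_cast this
    have hrl : r ^ l = (a i : ℚ) / (a j : ℚ) := by
      have : ((r ^ l : ℚ) : ℝ) = (((a i : ℚ) / (a j : ℚ) : ℚ) : ℝ) := by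
        push_cast
        rw [hr]
        have := hβpow i
        push_cast at this
        rw [← this]
      exact_mod_cast this
    set u : ℕ := r.num.natAbs with hu
    set v : ℕ := r.den with hv
    have hnum : (u : ℤ) = r.num := Int.natAbs_of_nonneg (le_of_lt (Rat.num_pos.mpr hrpos))
    have hruv : (r : ℚ) = (u : ℚ) / (v : ℚ) := by
      have hnum' : ((r.num : ℚ)) = (u : ℚ) := by exact_mod_cast hnum.symm
      rw [← Rat.num_div_den r, hnum']
    have hcop : Nat.Coprime u v := r.reduced
    have hv0 : (v : ℚ) ≠ 0 := Nat.cast_ne_zero.mpr r.den_nz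
    have haj0 : ((a j : ℚ)) ≠ 0 := by
      have : (0:ℚ) < (a j : ℚ) := by exact_mod_cast (by have := ha2 j; omega : 0 < a j)
      exact this.ne'
    have key : u ^ l * a j = v ^ l * a i := by
      have : ((u ^ l * a j : ℕ) : ℚ) = ((v ^ l * a i : ℕ) : ℚ) := by
        push_cast
        rw [hruv] at hrl
        rw [div_pow, div_eq_div_iff (pow_ne_zero _ hv0) haj0] at hrl
        linear_combination hrl
      exact_mod_cast this
    -- v ^ l ∣ a j
    have hvdvd : v ^ l ∣ a j := by
      have h1 : v ^ l ∣ a j * u ^ l := ⟨a i, by rw [Nat.mul_comm]; exact key⟩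
      exact Nat.Coprime.dvd_of_dvd_mul_right (Nat.Coprime.pow l l hcop.symm) h1
    have hudvd : u ^ l ∣ a i := by
      have h1 : u ^ l ∣ a i * v ^ l := ⟨a j, by rw [Nat.mul_comm]; exact key.symm⟩
      exact Nat.Coprime.dvd_of_dvd_mul_right (Nat.Coprime.pow l l hcop) h1
    obtain ⟨cj, hcj⟩ := hvdvd
    obtain ⟨ci, hci⟩ := hudvd
    have hv1 : v = 1 := hpf j v cj hcj
    have hu1 : u = 1 := hpf i u ci hci
    have : a i = a j := by
      have := key
      rw [hv1, hu1] at this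
      simpa using this.symm
    exact hij (hinj this)
  -- integrality and zero next coefficient
  have hβdata : ∀ i, IsIntegral ℚ (β i) := by
    intro i
    rcases eq_or_ne i j with rfl | hij
    · have : β i = 1 := div_self (hαpos i).ne'
      rw [this]; exact isIntegral_one
    · exact (radical_nextCoeff_zero (β i) (hβpos i) l (by omega) _ (hβpow i) (hβirr i hij)).1
  have hβnext : ∀ i, i ≠ j → (minpoly ℚ (β i)).nextCoeff = 0 := fun i hij =>
    (radical_nextCoeff_zero (β i) (hβpos i) l (by omega) _ (hβpow i) (hβirr i hij)).2
  -- the compositum field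
  set K : IntermediateField ℚ ℝ := IntermediateField.adjoin ℚ (Set.range β) with hK
  haveI : Finite (Set.range β) := Set.finite_range β
  haveI : FiniteDimensional ℚ K :=
    IntermediateField.finiteDimensional_adjoin (fun x hx => by
      obtain ⟨i, rfl⟩ := hx; exact hβdata i)
  set B : Fin m → K := fun i => ⟨β i, IntermediateField.subset_adjoin ℚ _ ⟨i, rfl⟩⟩ with hB
  have hBj : B j = 1 := by
    apply Subtype.ext
    show β j = 1
    exact div_self (hαpos j).ne'
  have hsum2 : ∑ i, (c i : ℚ) • B i = 0 := by
    have hcoe : ((∑ i, (c i : ℚ) • B i : K) : ℝ) = ∑ i, (c i : ℝ) * β i := by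
      push_cast
      rfl
    have hval : ∑ i, (c i : ℝ) * β i = 0 := by
      have hsumα : ∑ i, (c i : ℝ) * α i = 0 := hsum
      have : ∑ i, (c i : ℝ) * β i = (∑ i, (c i : ℝ) * α i) / α j := by
        rw [Finset.sum_div]
        exact Finset.sum_congr rfl fun i _ => (mul_div_assoc _ _ _).symm
      rw [this, hsumα, zero_div]
    exact Subtype.ext (by rw [hcoe, hval]; rfl)
  have htr := congrArg (Algebra.trace ℚ K) hsum2
  rw [map_sum, map_zero] at htr
  have htr2 : ∀ i, Algebra.trace ℚ K ((c i : ℚ) • B i)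
      = (c i : ℚ) * Algebra.trace ℚ K (B i) := fun i => by
    rw [map_smul, smul_eq_mul]
  rw [Finset.sum_congr rfl (fun i _ => htr2 i)] at htr
  have hzero : ∀ i, i ≠ j → Algebra.trace ℚ K (B i) = 0 := by
    intro i hij
    apply trace_eq_zero_of_nextCoeff_zero
    have : minpoly ℚ (B i) = minpoly ℚ (β i) := by
      have := minpoly.algebraMap_eq (A := ℚ) (algebraMap K ℝ).injective (B i)
      rw [← this]; rfl
    rw [this]
    exact hβnext i hij
  rw [Finset.sum_eq_single j (fun i _ hij => by rw [hzero i hij, mul_zero])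
    (fun h => absurd (Finset.mem_univ j) h)] at htr
  rw [hBj] at htr
  have htrone : Algebra.trace ℚ K (1 : K) = (Module.finrank ℚ K : ℚ) := by
    have := Algebra.trace_algebraMap (R := ℚ) (S := K) 1
    rw [map_one] at this
    rw [this]
    simp
  rw [htrone] at htr
  have hrank : 0 < Module.finrank ℚ K := Module.finrank_pos
  have : (c j : ℚ) = 0 := by
    rcases mul_eq_zero.mp htr with h | h
    · exact h
    · exact absurd h (by positivity)
  exact_mod_cast this
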